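/- Let T be a finite combinatorial tree, α ∈ [0,1), and {i,j} ∈ E an edge such that 1/deg(i) + 1/deg(j) ≤ 1/(1−α). Then the Ollivier-Ricci curvature satisfies κ^{or,α}_{ij} = 2(1−α)·(1/deg(i) + 1/deg(j) − 1). -/

import Mathlib

/-- 1-Wasserstein distance on a graph w.r.t. the shortest path metric. -/
noncomputable def W1 {V : Type*} [Fintype V] (G : SimpleGraph V) (μ ν : V → ℝ) : ℝ :=
  sInf { c : ℝ | ∃ π : V → V → ℝ, (∀ i j, 0 ≤ π i j) ∧
    (∀ j, ∑ i, π i j = μ j) ∧ (∀ i, ∑ j, π i j = ν i) ∧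
    c = ∑ i, ∑ j, π i j * (G.dist i j : ℝ) }

/-- The α-lazy random walk measure at `x`. -/
noncomputable def lazy {V : Type*} [Fintype V] [DecidableEq V] (G : SimpleGraph V)
    [DecidableRel G.Adj] (α : ℝ) (x : V) : V → ℝ :=
  fun y => if y = x then α else if G.Adj x y then (1 - α) / (G.degree x : ℝ) else 0

section aux
variable {V : Type*} [Fintype V] [DecidableEq V] (G : SimpleGraph V) [DecidableRel G.Adj]
set_option linter.unusedSectionVars false

lemma tree_dist (hT : G.IsTree) {u v : V} (p : G.Walk u v) (hp : p.IsPath) :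
    G.dist u v = p.length := by
  obtain ⟨w, hw, hlen⟩ := hT.isConnected.exists_path_of_dist u v
  obtain ⟨p0, _, hu⟩ := hT.existsUnique_path u v
  rw [← hlen, (hu w hw).trans (hu p hp).symm]

lemma no_common {i j : V} (hT : G.IsTree) (hadj : G.Adj i j) (z : V)
    (h1 : G.Adj i z) (h2 : G.Adj j z) : False := by
  obtain ⟨p0, _, hu⟩ := hT.existsUnique_path i j
  have e := (hu (SimpleGraph.Walk.cons hadj SimpleGraph.Walk.nil) (by simp [hadj.ne])).trans
    (hu (SimpleGraph.Walk.cons h1 (SimpleGraph.Walk.cons h2.symm SimpleGraph.Walk.nil))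
      (by simp [hadj.ne, h1.ne, h2.ne'])).symm
  have := congrArg SimpleGraph.Walk.length e
  simp at this

lemma lazy_sum_mul (α : ℝ) (x : V) (g : V → ℝ) :
    ∑ y, lazy G α x y * g y
      = α * g x + ∑ y ∈ G.neighborFinset x, ((1 - α) / (G.degree x : ℝ)) * g y := by
  rw [← Finset.add_sum_erase _ (fun y => lazy G α x y * g y) (Finset.mem_univ x)]
  congr 1
  · simp [lazy]
  · rw [Finset.sum_congr rfl (g := fun y =>
      if G.Adj x y then ((1 - α) / (G.degree x : ℝ)) * g y else 0)
      (fun y hy => by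
        simp only [Finset.mem_erase] at hy
        simp [lazy, hy.1, ite_mul]),
      ← Finset.sum_filter]
    congr 1
    ext y
    simp only [Finset.mem_filter, Finset.mem_erase, Finset.mem_univ, and_true, true_and,
      SimpleGraph.mem_neighborFinset]
    exact ⟨fun h => h.2, fun h => ⟨h.ne', h⟩⟩

lemma lazyA_sum_mul (α : ℝ) {i j : V} (hadj : G.Adj i j) (g : V → ℝ) :
    ∑ y, (if y = j then 0 else lazy G α i y) * g y
      = α * g i + ∑ y ∈ (G.neighborFinset i).erase j, ((1 - α) / (G.degree i : ℝ)) * g y := by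
  have h1 : ∀ y, (if y = j then 0 else lazy G α i y) * g y
      = lazy G α i y * (if y = j then 0 else g y) := by
    intro y; by_cases h : y = j <;> simp [h]
  rw [Finset.sum_congr rfl (fun y _ => h1 y), lazy_sum_mul]
  congr 1
  · rw [if_neg hadj.ne]
  · rw [← Finset.add_sum_erase _ _ (by simpa using hadj)]
    rw [if_pos rfl, mul_zero, zero_add]
    exact Finset.sum_congr rfl (fun y hy => by rw [if_neg (Finset.mem_erase.mp hy).1])

end aux


theorem stmt_11 {V : Type*} [Fintype V] [DecidableEq V] (G : SimpleGraph V)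
    [DecidableRel G.Adj] (hT : G.IsTree) (α : ℝ) (hα : α ∈ Set.Ico (0 : ℝ) 1)
    (i j : V) (hadj : G.Adj i j)
    (hcond : 1 / (G.degree i : ℝ) + 1 / (G.degree j : ℝ) ≤ 1 / (1 - α)) :
    1 - W1 G (lazy G α i) (lazy G α j) / (G.dist i j : ℝ) =
      2 * (1 - α) * (1 / (G.degree i : ℝ) + 1 / (G.degree j : ℝ) - 1) := by
  obtain ⟨hα0, hα1⟩ := hα
  have h1α : (0:ℝ) < 1 - α := by linarith
  have hdi : 0 < G.degree i := G.degree_pos_iff_exists_adj i |>.mpr ⟨j, hadj⟩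
  have hdj : 0 < G.degree j := G.degree_pos_iff_exists_adj j |>.mpr ⟨i, hadj.symm⟩
  have hdi' : (0:ℝ) < (G.degree i : ℝ) := by exact_mod_cast hdi
  have hdj' : (0:ℝ) < (G.degree j : ℝ) := by exact_mod_cast hdj
  set di := (G.degree i : ℝ) with hdidef
  set dj := (G.degree j : ℝ) with hdjdef
  set p := (1 - α) / di with hpdef
  set q := (1 - α) / dj with hqdef
  have hp : 0 < p := div_pos h1α hdi'
  have hq : 0 < q := div_pos h1α hdj'
  have hpdi : p * di = 1 - α := div_mul_cancel₀ _ (ne_of_gt hdi')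
  have hqdj : q * dj = 1 - α := div_mul_cancel₀ _ (ne_of_gt hdj')
  have hpq : p + q ≤ 1 := by
    have h2 : (1 - α) * (1 / di + 1 / dj) ≤ (1 - α) * (1 / (1 - α)) :=
      mul_le_mul_of_nonneg_left hcond h1α.le
    rw [mul_one_div, div_self (ne_of_gt h1α)] at h2
    calc p + q = (1 - α) * (1 / di + 1 / dj) := by
          rw [hpdef, hqdef]; ring
      _ ≤ 1 := h2
  have hp1 : (0:ℝ) < 1 - p := by linarith
  have hq1 : (0:ℝ) < 1 - q := by linarith
  have hij : i ≠ j := hadj.ne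
  have hnc : ∀ z, G.Adj i z → G.Adj j z → False := no_common G hT hadj
  -- distance facts
  have d_ij : G.dist i j = 1 := SimpleGraph.dist_eq_one_iff_adj.mpr hadj
  have d_jy : ∀ y, G.Adj i y → y ≠ j → G.dist j y = 2 := by
    intro y h hy
    have := tree_dist G hT (SimpleGraph.Walk.cons hadj.symm (SimpleGraph.Walk.cons h
      SimpleGraph.Walk.nil)) (by simp [Ne.symm hij, h.ne, Ne.symm hy])
    simpa using this
  have d_xi : ∀ x, G.Adj j x → x ≠ i → G.dist x i = 2 := by
    intro x h hx
    have := tree_dist G hT (SimpleGraph.Walk.cons h.symm (SimpleGraph.Walk.cons hadj.symm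
      SimpleGraph.Walk.nil)) (by simp [h.ne', hx, Ne.symm hij])
    simpa using this
  have d_xy : ∀ x y, G.Adj j x → x ≠ i → G.Adj i y → y ≠ j → G.dist x y = 3 := by
    intro x y h1 hx h2 hy
    have hxy : x ≠ y := fun he => hnc x (he ▸ h2) h1
    have := tree_dist G hT (SimpleGraph.Walk.cons h1.symm (SimpleGraph.Walk.cons hadj.symm
      (SimpleGraph.Walk.cons h2 SimpleGraph.Walk.nil)))
      (by simp [h1.ne', hx, hxy, Ne.symm hij, Ne.symm hy, h2.ne])
    simpa using this
  -- the W1 value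
  have hW : W1 G (lazy G α i) (lazy G α j) = 3 - 2*α - 2*p - 2*q := by
    have hlz : ∀ (x y : V), 0 ≤ lazy G α x y := by
      intro x y
      unfold lazy
      split
      · exact hα0
      split
      · positivity
      · exact le_refl 0
    have hcard_i : ((G.neighborFinset i).erase j).card = G.degree i - 1 := by
      rw [Finset.card_erase_of_mem (by simpa using hadj)]
      rfl
    have hcard_j : ((G.neighborFinset j).erase i).card = G.degree j - 1 := by
      rw [Finset.card_erase_of_mem (by simpa using hadj.symm)]
      rfl
    have hcasti : (((G.degree i - 1 : ℕ)) : ℝ) = di - 1 := by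
      rw [Nat.cast_sub hdi, hdidef]
      norm_num
    have hcastj : (((G.degree j - 1 : ℕ)) : ℝ) = dj - 1 := by
      rw [Nat.cast_sub hdj, hdjdef]
      norm_num
    have hP : p * (di - 1) = 1 - α - p := by rw [mul_sub, hpdi]; ring
    have hQ : q * (dj - 1) = 1 - α - q := by rw [mul_sub, hqdj]; ring
    have hsum_erase_i : ∀ (g : V → ℝ) (c : ℝ),
        (∀ y ∈ (G.neighborFinset i).erase j, g y = c) →
        ∑ y ∈ (G.neighborFinset i).erase j, ((1 - α) / di) * g y = p * ((di - 1) * c) := by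
      intro g c hg
      rw [Finset.sum_congr rfl (fun y hy => by rw [hg y hy]), Finset.sum_const, hcard_i,
        nsmul_eq_mul, hcasti, ← hpdef]
      ring
    have hsum_erase_j : ∀ (g : V → ℝ) (c : ℝ),
        (∀ x ∈ (G.neighborFinset j).erase i, g x = c) →
        ∑ x ∈ (G.neighborFinset j).erase i, ((1 - α) / dj) * g x = q * ((dj - 1) * c) := by
      intro g c hg
      rw [Finset.sum_congr rfl (fun x hx => by rw [hg x hx]), Finset.sum_const, hcard_j,
        nsmul_eq_mul, hcastj, ← hqdef]
      ring
    have hmem_i : ∀ y ∈ (G.neighborFinset i).erase j, G.Adj i y ∧ y ≠ j := by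
      intro y hy
      rcases Finset.mem_erase.mp hy with ⟨h1, h2⟩
      exact ⟨by simpa using h2, h1⟩
    have hmem_j : ∀ x ∈ (G.neighborFinset j).erase i, G.Adj j x ∧ x ≠ i := by
      intro x hx
      rcases Finset.mem_erase.mp hx with ⟨h1, h2⟩
      exact ⟨by simpa using h2, h1⟩
    have hμj : lazy G α i j = p := by
      unfold lazy
      rw [if_neg (Ne.symm hij), if_pos hadj, ← hdidef, ← hpdef]
    have hνi : lazy G α j i = q := by
      unfold lazy
      rw [if_neg hij, if_pos hadj.symm, ← hdjdef, ← hqdef]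
    have SAg : ∀ g : V → ℝ, ∑ y, (if y = j then 0 else lazy G α i y) * g y
        = α * g i + ∑ y ∈ (G.neighborFinset i).erase j, ((1 - α) / di) * g y := by
      intro g
      rw [lazyA_sum_mul G α hadj g, hdidef]
    have SBg : ∀ g : V → ℝ, ∑ x, (if x = i then 0 else lazy G α j x) * g x
        = α * g j + ∑ x ∈ (G.neighborFinset j).erase i, ((1 - α) / dj) * g x := by
      intro g
      rw [lazyA_sum_mul G α hadj.symm g, hdjdef]
    have SA : ∑ y, (if y = j then (0:ℝ) else lazy G α i y) = 1 - p := by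
      have h := SAg (fun _ => 1)
      rw [hsum_erase_i (fun _ => 1) 1 (fun y _ => rfl)] at h
      simp only [mul_one] at h
      rw [h, hP]
      ring
    have SB : ∑ x, (if x = i then (0:ℝ) else lazy G α j x) = 1 - q := by
      have h := SBg (fun _ => 1)
      rw [hsum_erase_j (fun _ => 1) 1 (fun x _ => rfl)] at h
      simp only [mul_one] at h
      rw [h, hQ]
      ring
    -- distance-weighted sums
    have SAdi : ∑ y, (if y = j then (0:ℝ) else lazy G α i y) * (G.dist i y : ℝ)
        = 1 - α - p := by
      rw [SAg (fun y => (G.dist i y : ℝ)),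
        hsum_erase_i _ 1 (fun y hy => by
          rw [SimpleGraph.dist_eq_one_iff_adj.mpr (hmem_i y hy).1]
          norm_num),
        mul_one, hP]
      simp
    have SAdj : ∑ y, (if y = j then (0:ℝ) else lazy G α i y) * (G.dist j y : ℝ)
        = α + 2 * (1 - α - p) := by
      rw [SAg (fun y => (G.dist j y : ℝ)),
        hsum_erase_i _ 2 (fun y hy => by
          rw [d_jy y (hmem_i y hy).1 (hmem_i y hy).2]
          norm_num)]
      rw [SimpleGraph.dist_comm, d_ij]
      rw [show (di - 1) * 2 = 2 * (di - 1) by ring, ← mul_assoc, mul_comm p 2, mul_assoc, hP]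
      norm_num
    have SAdx : ∀ x, G.Adj j x → x ≠ i →
        ∑ y, (if y = j then (0:ℝ) else lazy G α i y) * (G.dist x y : ℝ)
          = 2 * α + 3 * (1 - α - p) := by
      intro x h1 hx
      rw [SAg (fun y => (G.dist x y : ℝ)),
        hsum_erase_i _ 3 (fun y hy => by
          rw [d_xy x y h1 hx (hmem_i y hy).1 (hmem_i y hy).2]
          norm_num)]
      rw [d_xi x h1 hx]
      rw [show (di - 1) * 3 = 3 * (di - 1) by ring, ← mul_assoc, mul_comm p 3, mul_assoc, hP]
      norm_num
      ring
    have SBdj : ∑ x, (if x = i then (0:ℝ) else lazy G α j x) * (G.dist x j : ℝ)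
        = 1 - α - q := by
      rw [SBg (fun x => (G.dist x j : ℝ)),
        hsum_erase_j _ 1 (fun x hx => by
          rw [SimpleGraph.dist_eq_one_iff_adj.mpr (hmem_j x hx).1.symm]
          norm_num),
        mul_one, hQ]
      simp
    -- the transport plan
    set c1 : ℝ := q / (1 - p) with hc1
    set c2 : ℝ := (1 - p - q) / ((1 - p) * (1 - q)) with hc2
    set c3 : ℝ := p / (1 - q) with hc3
    have hc1n : 0 ≤ c1 := by positivity
    have hc2n : 0 ≤ c2 := by
      apply div_nonneg (by linarith) (by positivity)
    have hc3n : 0 ≤ c3 := by positivity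
    set A : V → ℝ := fun y => if y = j then 0 else lazy G α i y with hAdef
    set B : V → ℝ := fun x => if x = i then 0 else lazy G α j x with hBdef
    have hAn : ∀ y, 0 ≤ A y := by
      intro y
      rw [hAdef]
      dsimp only
      split
      · exact le_refl 0
      · exact hlz i y
    have hBn : ∀ x, 0 ≤ B x := by
      intro x
      rw [hBdef]
      dsimp only
      split
      · exact le_refl 0
      · exact hlz j x
    set π : V → V → ℝ := fun x y =>
      (if x = i then c1 * A y else 0) + c2 * B x * A y + (if y = j then c3 * B x else 0)
      with hπdef
    have hπn : ∀ x y, 0 ≤ π x y := by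
      intro x y
      rw [hπdef]
      dsimp only
      have t1 : (0:ℝ) ≤ (if x = i then c1 * A y else 0) := by
        split
        · exact mul_nonneg hc1n (hAn y)
        · exact le_refl 0
      have t2 : (0:ℝ) ≤ c2 * B x * A y := mul_nonneg (mul_nonneg hc2n (hBn x)) (hAn y)
      have t3 : (0:ℝ) ≤ (if y = j then c3 * B x else 0) := by
        split
        · exact mul_nonneg hc3n (hBn x)
        · exact le_refl 0
      linarith
    have hcol : ∀ y, ∑ x, π x y = lazy G α i y := by
      intro y
      rw [hπdef]
      dsimp only
      rw [Finset.sum_add_distrib, Finset.sum_add_distrib]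
      rw [Finset.sum_ite_eq' Finset.univ i (fun _ => c1 * A y)]
      have e2 : ∑ x, c2 * B x * A y = c2 * (1 - q) * A y := by
        rw [Finset.sum_congr rfl (fun x _ => show c2 * B x * A y = (c2 * A y) * B x by ring),
          ← Finset.mul_sum, hBdef]
        dsimp only
        rw [SB]
        ring
      have e3 : ∑ x, (if y = j then c3 * B x else 0) = if y = j then c3 * (1 - q) else 0 := by
        by_cases hy : y = j
        · simp only [hy, eq_self_iff_true, if_true]
          rw [← Finset.mul_sum, hBdef]
          dsimp only
          rw [SB]
        · simp [hy]
      rw [e2, e3]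
      simp only [Finset.mem_univ, if_pos]
      by_cases hy : y = j
      · subst hy
        rw [hAdef]
        dsimp only
        rw [if_pos rfl, if_pos rfl, hμj]
        rw [hc3]
        field_simp
        ring
      · rw [if_neg hy, hAdef]
        dsimp only
        rw [if_neg hy, add_zero]
        have : c1 + c2 * (1 - q) = 1 := by
          rw [hc1, hc2]
          field_simp
          ring
        have goal : c1 * lazy G α i y + c2 * (1 - q) * lazy G α i y
            = (c1 + c2 * (1 - q)) * lazy G α i y := by ring
        rw [goal, this, one_mul]
    have hrow : ∀ x, ∑ y, π x y = lazy G α j x := by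
      intro x
      rw [hπdef]
      dsimp only
      rw [Finset.sum_add_distrib, Finset.sum_add_distrib]
      have e1 : ∑ y, (if x = i then c1 * A y else 0) = if x = i then c1 * (1 - p) else 0 := by
        by_cases hx : x = i
        · simp only [hx, eq_self_iff_true, if_true]
          rw [← Finset.mul_sum, hAdef]
          dsimp only
          rw [SA]
        · simp [hx]
      have e2 : ∑ y, c2 * B x * A y = c2 * B x * (1 - p) := by
        rw [← Finset.mul_sum, hAdef]
        dsimp only
        rw [SA]
      have e3 : ∑ y, (if y = j then c3 * B x else 0) = c3 * B x := by
        rw [Finset.sum_ite_eq' Finset.univ j (fun _ => c3 * B x)]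
        simp
      rw [e1, e2, e3]
      by_cases hx : x = i
      · subst hx
        rw [if_pos rfl, hBdef]
        dsimp only
        rw [if_pos rfl, hνi]
        rw [hc1]
        field_simp
        ring
      · rw [if_neg hx, hBdef]
        dsimp only
        rw [if_neg hx, zero_add]
        have : c2 * (1 - p) + c3 = 1 := by
          rw [hc2, hc3]
          field_simp
          ring
        have goal : c2 * lazy G α j x * (1 - p) + c3 * lazy G α j x
            = (c2 * (1 - p) + c3) * lazy G α j x := by ring
        rw [goal, this, one_mul]
    have hcost : ∑ x, ∑ y, π x y * (G.dist x y : ℝ) = 3 - 2*α - 2*p - 2*q := by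
      have inner : ∀ x, ∑ y, π x y * (G.dist x y : ℝ)
          = (if x = i then c1 * (1 - α - p) else 0)
            + c2 * B x * (∑ y, A y * (G.dist x y : ℝ))
            + c3 * B x * (G.dist x j : ℝ) := by
        intro x
        rw [hπdef]
        dsimp only
        rw [Finset.sum_congr rfl (fun y _ => show
          ((if x = i then c1 * A y else 0) + c2 * B x * A y
            + (if y = j then c3 * B x else 0)) * (G.dist x y : ℝ)
          = (if x = i then c1 * (A y * (G.dist x y : ℝ)) else 0)
            + c2 * B x * (A y * (G.dist x y : ℝ))
            + (if y = j then (c3 * B x) * (G.dist x y : ℝ) else 0) by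
            by_cases h1 : x = i <;> by_cases h2 : y = j <;> simp [h1, h2] <;> ring)]
        rw [Finset.sum_add_distrib, Finset.sum_add_distrib]
        congr 1
        congr 1
        · by_cases h1 : x = i
          · simp only [h1, eq_self_iff_true, if_true]
            rw [← Finset.mul_sum]
            have : ∑ y, A y * (G.dist i y : ℝ) = 1 - α - p := by
              rw [hAdef]
              dsimp only
              exact SAdi
            rw [this]
          · simp [h1]
        · rw [← Finset.mul_sum]
        · rw [Finset.sum_ite_eq' Finset.univ j (fun y => (c3 * B x) * (G.dist x y : ℝ))]
          simp
      rw [Finset.sum_congr rfl (fun x _ => inner x)]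
      rw [Finset.sum_add_distrib, Finset.sum_add_distrib]
      rw [Finset.sum_ite_eq' Finset.univ i
        (fun _ => c1 * (1 - α - p))]
      have em : ∑ x, c2 * B x * (∑ y, A y * (G.dist x y : ℝ))
          = c2 * (α * (α + 2 * (1 - α - p)) + q * ((dj - 1) * (2*α + 3*(1 - α - p)))) := by
        rw [Finset.sum_congr rfl (fun x _ => show
            c2 * B x * (∑ y, A y * (G.dist x y : ℝ))
            = c2 * (B x * (∑ y, A y * (G.dist x y : ℝ))) by ring), ← Finset.mul_sum]
        congr 1
        have : ∑ x, B x * (∑ y, A y * (G.dist x y : ℝ))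
            = α * (∑ y, A y * (G.dist j y : ℝ))
              + ∑ x ∈ (G.neighborFinset j).erase i, ((1 - α) / dj) * (∑ y, A y * (G.dist x y : ℝ)) := by
          rw [hBdef]
          dsimp only
          exact SBg (fun x => ∑ y, A y * (G.dist x y : ℝ))
        rw [this]
        have eAj : ∑ y, A y * (G.dist j y : ℝ) = α + 2 * (1 - α - p) := by
          rw [hAdef]; dsimp only; exact SAdj
        have eAx : ∀ x ∈ (G.neighborFinset j).erase i,
            ∑ y, A y * (G.dist x y : ℝ) = 2*α + 3*(1 - α - p) := by
          intro x hx
          rw [hAdef]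
          dsimp only
          exact SAdx x (hmem_j x hx).1 (hmem_j x hx).2
        rw [eAj, hsum_erase_j _ (2*α + 3*(1 - α - p)) eAx]
      have e3 : ∑ x, c3 * B x * (G.dist x j : ℝ) = c3 * (1 - α - q) := by
        rw [Finset.sum_congr rfl (fun x _ => show c3 * B x * (G.dist x j : ℝ)
          = c3 * (B x * (G.dist x j : ℝ)) by ring), ← Finset.mul_sum]
        congr 1
      rw [em, e3]
      simp only [Finset.mem_univ, if_pos]
      rw [hc1, hc2, hc3, ← mul_assoc q, hQ]
      field_simp
      ring
    -- membership
    have hmem : (3 - 2*α - 2*p - 2*q) ∈ { c : ℝ | ∃ π : V → V → ℝ, (∀ x y, 0 ≤ π x y) ∧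
        (∀ y, ∑ x, π x y = lazy G α i y) ∧ (∀ x, ∑ y, π x y = lazy G α j x) ∧
        c = ∑ x, ∑ y, π x y * (G.dist x y : ℝ) } :=
      ⟨π, hπn, hcol, hrow, hcost.symm⟩
    -- dual function and lower bound
    set f : V → ℝ := fun x => if x = i then 0 else if x = j then 1 else
      if G.Adj j x then 2 else if G.Adj i x then -1 else 0 with hfdef
    have fi : f i = 0 := by
      rw [hfdef]
      dsimp only
      rw [if_pos rfl]
    have fj : f j = 1 := by
      rw [hfdef]
      dsimp only
      rw [if_neg (Ne.symm hij), if_pos rfl]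
    have fyn : ∀ y, G.Adj i y → y ≠ j → f y = -1 := by
      intro y h hyj
      rw [hfdef]
      dsimp only
      rw [if_neg h.ne', if_neg hyj, if_neg (fun hh => hnc y h hh), if_pos h]
    have fx2 : ∀ x, G.Adj j x → x ≠ i → f x = 2 := by
      intro x h hxi
      rw [hfdef]
      dsimp only
      rw [if_neg hxi, if_neg h.ne', if_pos h]
    have hfν : ∑ x, lazy G α j x * f x = α + 2 * (1 - α - q) := by
      rw [lazy_sum_mul]
      rw [← hdjdef,
        ← Finset.add_sum_erase _ (fun x => ((1 - α) / dj) * f x) (by simpa using hadj.symm)]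
      rw [fj, fi, hsum_erase_j _ 2 (fun x hx => fx2 x (hmem_j x hx).1 (hmem_j x hx).2),
        ← mul_assoc q, hQ]
      ring
    have hfμ : ∑ y, lazy G α i y * f y = p - (1 - α - p) := by
      rw [lazy_sum_mul]
      rw [← hdidef,
        ← Finset.add_sum_erase _ (fun y => ((1 - α) / di) * f y) (by simpa using hadj)]
      rw [fj, fi, hsum_erase_i _ (-1) (fun y hy => fyn y (hmem_i y hy).1 (hmem_i y hy).2),
        ← mul_assoc p, hP, ← hpdef]
      ring
    have hfd : ∀ x y, lazy G α j x ≠ 0 → lazy G α i y ≠ 0 →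
        f x - f y ≤ (G.dist x y : ℝ) := by
      intro x y hx hy
      have hx' : x = j ∨ G.Adj j x := by
        by_cases h : x = j
        · exact Or.inl h
        · by_cases h2 : G.Adj j x
          · exact Or.inr h2
          · exact absurd (by unfold lazy; rw [if_neg h, if_neg h2]) hx
      have hy' : y = i ∨ G.Adj i y := by
        by_cases h : y = i
        · exact Or.inl h
        · by_cases h2 : G.Adj i y
          · exact Or.inr h2
          · exact absurd (by unfold lazy; rw [if_neg h, if_neg h2]) hy
      rcases hx' with hxj | hax
      · rcases hy' with hyi | hay
        · rw [hxj, hyi, fj, fi, SimpleGraph.dist_comm, d_ij]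
          norm_num
        · by_cases hyj : y = j
          · rw [hxj, hyj]
            simp [SimpleGraph.dist_self]
          · rw [hxj, fj, fyn y hay hyj, d_jy y hay hyj]
            norm_num
      · by_cases hxi : x = i
        · rcases hy' with hyi | hay
          · rw [hxi, hyi]
            simp [SimpleGraph.dist_self]
          · by_cases hyj : y = j
            · rw [hxi, hyj, fi, fj, d_ij]
              norm_num
            · rw [hxi, fi, fyn y hay hyj, SimpleGraph.dist_eq_one_iff_adj.mpr hay]
              norm_num
        · rcases hy' with hyi | hay
          · rw [hyi, fx2 x hax hxi, fi, d_xi x hax hxi]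
            norm_num
          · by_cases hyj : y = j
            · rw [hyj, fx2 x hax hxi, fj, SimpleGraph.dist_eq_one_iff_adj.mpr hax.symm]
              norm_num
            · rw [fx2 x hax hxi, fyn y hay hyj, d_xy x y hax hxi hay hyj]
              norm_num
    have hlb : ∀ c ∈ { c : ℝ | ∃ π : V → V → ℝ, (∀ x y, 0 ≤ π x y) ∧
        (∀ y, ∑ x, π x y = lazy G α i y) ∧ (∀ x, ∑ y, π x y = lazy G α j x) ∧
        c = ∑ x, ∑ y, π x y * (G.dist x y : ℝ) }, 3 - 2*α - 2*p - 2*q ≤ c := by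
      rintro c ⟨π', hpos', hcol', hrow', hceq'⟩
      have key : ∀ x y, π' x y * (f x - f y) ≤ π' x y * (G.dist x y : ℝ) := by
        intro x y
        by_cases h0 : π' x y = 0
        · rw [h0]
          simp
        · have hν : lazy G α j x ≠ 0 := by
            have hle : π' x y ≤ lazy G α j x := by
              rw [← hrow' x]
              exact Finset.single_le_sum (fun z _ => hpos' x z) (Finset.mem_univ y)
            have hgt : 0 < π' x y := lt_of_le_of_ne (hpos' x y) (Ne.symm h0)
            intro hzz
            rw [hzz] at hle
            linarith
          have hμ : lazy G α i y ≠ 0 := by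
            have hle : π' x y ≤ lazy G α i y := by
              rw [← hcol' y]
              exact Finset.single_le_sum (fun z _ => hpos' z y) (Finset.mem_univ x)
            have hgt : 0 < π' x y := lt_of_le_of_ne (hpos' x y) (Ne.symm h0)
            intro hzz
            rw [hzz] at hle
            linarith
          exact mul_le_mul_of_nonneg_left (hfd x y hν hμ) (hpos' x y)
      have e1 : ∑ x, ∑ y, π' x y * (f x - f y)
          = (∑ x, lazy G α j x * f x) - (∑ y, lazy G α i y * f y) := by
        have h1 : ∀ x, ∑ y, π' x y * (f x - f y)
            = (∑ y, π' x y) * f x - ∑ y, π' x y * f y := by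
          intro x
          rw [Finset.sum_mul, ← Finset.sum_sub_distrib]
          exact Finset.sum_congr rfl (fun y _ => by ring)
        rw [Finset.sum_congr rfl (fun x _ => h1 x), Finset.sum_sub_distrib]
        congr 1
        · exact Finset.sum_congr rfl (fun x _ => by rw [hrow' x])
        · rw [Finset.sum_comm]
          exact Finset.sum_congr rfl (fun y _ => by rw [← Finset.sum_mul, hcol' y])
      calc 3 - 2*α - 2*p - 2*q
          = (α + 2*(1 - α - q)) - (p - (1 - α - p)) := by ring
        _ = (∑ x, lazy G α j x * f x) - (∑ y, lazy G α i y * f y) := by rw [hfν, hfμ]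
        _ = ∑ x, ∑ y, π' x y * (f x - f y) := e1.symm
        _ ≤ ∑ x, ∑ y, π' x y * (G.dist x y : ℝ) :=
            Finset.sum_le_sum (fun x _ => Finset.sum_le_sum (fun y _ => key x y))
        _ = c := hceq'.symm
    unfold W1
    exact le_antisymm (csInf_le ⟨_, fun c hc => hlb c hc⟩ hmem) (le_csInf ⟨_, hmem⟩ hlb)
  rw [hW, d_ij]
  push_cast
  rw [hpdef, hqdef]
  field_simp
  ring
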